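/- Let v, w ∈ M_k(ℂ)^d be two primitive normalized tuples with faithful invariant density matrices ρ_v, ρ_w, related by v_μ = e^{iλ} V* w_μ V for a unitary V and phase e^{iλ}, with ρ_w = V ρ_v V*. Suppose θ, ξ are anti-unitaries on ℂ^k and phases e^{it}, e^{iu} satisfy v_μ = e^{it} ρ_v^{-1/2} θ v_μ* θ* ρ_v^{1/2} and w_μ = e^{iu} ρ_w^{-1/2} ξ w_μ* ξ* ρ_w^{1/2} for all μ. Then ξ* V θ V* is a scalar of modulus 1, and consequently V θ² V* = ξ²; in particular the sign of θ² equals the sign of ξ². -/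

import Mathlib

open Matrix
open scoped ComplexOrder

section Aux

variable {k : Type*} [Fintype k] [DecidableEq k]

omit [DecidableEq k] in
lemma aux_map_mul (X Y : Matrix k k ℂ) :
    (X * Y).map star = X.map star * Y.map star := by
  ext i j; simp [Matrix.mul_apply, Matrix.map_apply, star_sum, star_mul']

omit [Fintype k] [DecidableEq k] in
lemma aux_map_smul (c : ℂ) (X : Matrix k k ℂ) :
    (c • X).map star = star c • X.map star := by
  ext i j; simp [Matrix.map_apply, star_mul']

omit [Fintype k] in
lemma aux_map_one : ((1 : Matrix k k ℂ)).map star = 1 := by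
  ext i j; simp [Matrix.one_apply, Matrix.map_apply, apply_ite (star : ℂ → ℂ)]

omit [Fintype k] [DecidableEq k] in
lemma aux_ct_map (X : Matrix k k ℂ) : (Xᴴ).map star = Xᵀ := by
  ext i j; simp [Matrix.conjTranspose_apply, Matrix.map_apply]

omit [Fintype k] [DecidableEq k] in
lemma aux_ct_t (X : Matrix k k ℂ) : (Xᴴ)ᵀ = X.map star := by
  ext i j; simp [Matrix.conjTranspose_apply, Matrix.map_apply]

omit [Fintype k] [DecidableEq k] in
lemma aux_t_map (X : Matrix k k ℂ) : (Xᵀ).map star = Xᴴ := rfl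

omit [Fintype k] [DecidableEq k] in
lemma aux_t_ct (X : Matrix k k ℂ) : (Xᵀ)ᴴ = (Xᴴ)ᵀ := by
  ext i j; simp [Matrix.conjTranspose_apply, Matrix.map_apply]

lemma aux_prod_comm {ι : Type*} [Fintype ι] (w : ι → Matrix k k ℂ)
    (F : Matrix k k ℂ) (c : ℂ) (h : ∀ μ, F * w μ = c • (w μ * F)) :
    ∀ (l : ℕ) (μ : Fin l → ι), F * (List.ofFn fun i => w (μ i)).prod
      = c ^ l • ((List.ofFn fun i => w (μ i)).prod * F) := by
  intro l
  induction l with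
  | zero => intro μ; simp
  | succ n ih =>
    intro μ
    rw [List.ofFn_succ, List.prod_cons]
    calc F * (w (μ 0) * (List.ofFn fun i => w (μ i.succ)).prod)
        = (F * w (μ 0)) * (List.ofFn fun i => w (μ i.succ)).prod := by rw [mul_assoc]
      _ = (c • (w (μ 0) * F)) * (List.ofFn fun i => w (μ i.succ)).prod := by rw [h]
      _ = c • (w (μ 0) * (F * (List.ofFn fun i => w (μ i.succ)).prod)) := by
          rw [smul_mul_assoc, mul_assoc]
      _ = c • (w (μ 0) * (c ^ n • ((List.ofFn fun i => w (μ i.succ)).prod * F))) := by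
          rw [ih]
      _ = c ^ (n + 1) • (w (μ 0) * (List.ofFn fun i => w (μ i.succ)).prod * F) := by
          rw [mul_smul_comm, smul_smul, pow_succ, mul_assoc]
          congr 1
          ring

end Aux

/-- Let `v, w` be two primitive normalized tuples with faithful invariant density
matrices `ρ_v, ρ_w` (with positive square roots `rv, rw`), related by
`v_μ = e^{iλ} V* w_μ V` for a unitary `V` and phase `e^{iλ}`, with
`ρ_w = V ρ_v V*`. Suppose anti-unitaries `θ, ξ` (matrices `A, B`) and phases
`zt, zu` satisfy `v_μ = zt ρ_v^{-1/2} θ v_μ* θ* ρ_v^{1/2}` and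
`w_μ = zu ρ_w^{-1/2} ξ w_μ* ξ* ρ_w^{1/2}` for all `μ` (where `θ x* θ*` has matrix
`A * xᵀ * Aᴴ`). Then `ξ* V θ V*` (matrix `Bᵀ * map star V * map star A * Vᴴ`) is a
modulus-one scalar, and consequently `V θ² V* = ξ²` (with `θ²` having matrix
`A * map star A`). -/
theorem stmt14 {k ι : Type*} [Fintype k] [DecidableEq k] [Nonempty k] [Fintype ι]
    (v w : ι → Matrix k k ℂ)
    (hprimv : ∃ L : ℕ, ∀ l ≥ L,
      Submodule.span ℂ
        {M : Matrix k k ℂ | ∃ μ : Fin l → ι, M = (List.ofFn fun i => v (μ i)).prod}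
        = ⊤)
    (hprimw : ∃ L : ℕ, ∀ l ≥ L,
      Submodule.span ℂ
        {M : Matrix k k ℂ | ∃ μ : Fin l → ι, M = (List.ofFn fun i => w (μ i)).prod}
        = ⊤)
    (hnormv : ∑ μ, v μ * (v μ)ᴴ = 1) (hnormw : ∑ μ, w μ * (w μ)ᴴ = 1)
    (ρv ρw rv rw : Matrix k k ℂ)
    (hρv : ρv.PosDef) (hρw : ρw.PosDef)
    (hinvv : ∑ μ, (v μ)ᴴ * ρv * v μ = ρv) (hinvw : ∑ μ, (w μ)ᴴ * ρw * w μ = ρw)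
    (hrv : rv.PosDef) (hrv2 : rv * rv = ρv)
    (hrw : rw.PosDef) (hrw2 : rw * rw = ρw)
    (V : Matrix k k ℂ) (hV : V ∈ Matrix.unitaryGroup k ℂ)
    (zlam : ℂ) (hzlam : ‖zlam‖ = 1)
    (hVrel : ∀ μ, v μ = zlam • (Vᴴ * w μ * V))
    (hρrel : ρw = V * ρv * Vᴴ)
    (A B : Matrix k k ℂ)
    (hA : A ∈ Matrix.unitaryGroup k ℂ) (hB : B ∈ Matrix.unitaryGroup k ℂ)
    (zt zu : ℂ) (hzt : ‖zt‖ = 1) (hzu : ‖zu‖ = 1)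
    (hθrel : ∀ μ, v μ = zt • (rv⁻¹ * (A * (v μ)ᵀ * Aᴴ) * rv))
    (hξrel : ∀ μ, w μ = zu • (rw⁻¹ * (B * (w μ)ᵀ * Bᴴ) * rw)) :
    (∃ η : ℂ, ‖η‖ = 1 ∧ Bᵀ * V.map star * A.map star * Vᴴ = η • 1) ∧
      V * (A * A.map star) * Vᴴ = B * B.map star := by
  -- unitarity facts
  have hVr : V * Vᴴ = 1 := by
    have := (Matrix.mem_unitaryGroup_iff).mp hV; rwa [Matrix.star_eq_conjTranspose] at this
  have hVl : Vᴴ * V = 1 := by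
    have := (Matrix.mem_unitaryGroup_iff').mp hV; rwa [Matrix.star_eq_conjTranspose] at this
  have hAr : A * Aᴴ = 1 := by
    have := (Matrix.mem_unitaryGroup_iff).mp hA; rwa [Matrix.star_eq_conjTranspose] at this
  have hAl : Aᴴ * A = 1 := by
    have := (Matrix.mem_unitaryGroup_iff').mp hA; rwa [Matrix.star_eq_conjTranspose] at this
  have hBr : B * Bᴴ = 1 := by
    have := (Matrix.mem_unitaryGroup_iff).mp hB; rwa [Matrix.star_eq_conjTranspose] at this
  have hBl : Bᴴ * B = 1 := by
    have := (Matrix.mem_unitaryGroup_iff').mp hB; rwa [Matrix.star_eq_conjTranspose] at this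
  -- nonvanishing of phases
  have hzl0 : zlam ≠ 0 := by intro h; rw [h, norm_zero] at hzlam; exact zero_ne_one hzlam
  have hzt0 : zt ≠ 0 := by intro h; rw [h, norm_zero] at hzt; exact zero_ne_one hzt
  have hzu0 : zu ≠ 0 := by intro h; rw [h, norm_zero] at hzu; exact zero_ne_one hzu
  -- rv, rw invertibility
  have hrvdet : IsUnit rv.det := isUnit_iff_ne_zero.mpr hrv.det_pos.ne'
  have hrvL : rv⁻¹ * rv = 1 := Matrix.nonsing_inv_mul rv hrvdet
  have hrvR : rv * rv⁻¹ = 1 := Matrix.mul_nonsing_inv rv hrvdet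
  have hrwL : rw⁻¹ * rw = 1 :=
    Matrix.nonsing_inv_mul rw (isUnit_iff_ne_zero.mpr hrw.det_pos.ne')
  have hrwR : rw * rw⁻¹ = 1 :=
    Matrix.mul_nonsing_inv rw (isUnit_iff_ne_zero.mpr hrw.det_pos.ne')
  -- rw = V rv Vᴴ
  have hrwf : rw = V * rv * Vᴴ := by
    have h1 : (V * rv * Vᴴ).PosSemidef := hrv.posSemidef.mul_mul_conjTranspose_same V
    open scoped MatrixOrder in
    refine (CFC.sq_eq_sq_iff rw (V * rv * Vᴴ) hrw.posSemidef.nonneg h1.nonneg).mp ?_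
    rw [pow_two, pow_two, hrw2, hρrel, ← hrv2,
      show V * rv * Vᴴ * (V * rv * Vᴴ) = V * (rv * ((Vᴴ * V) * rv)) * Vᴴ from by noncomm_ring,
      hVl]
    noncomm_ring
  have hrwi : rw⁻¹ = V * rv⁻¹ * Vᴴ := by
    refine Matrix.inv_eq_right_inv ?_
    rw [hrwf,
      show V * rv * Vᴴ * (V * rv⁻¹ * Vᴴ) = V * (rv * ((Vᴴ * V) * rv⁻¹)) * Vᴴ from by
        noncomm_ring,
      hVl, one_mul, hrvR, mul_one, hVr]
  -- C and its unitarity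
  set C : Matrix k k ℂ := V * A * Vᵀ with hC
  have hCt : Cᴴ = (Vᴴ)ᵀ * Aᴴ * Vᴴ := by
    rw [hC, Matrix.conjTranspose_mul, Matrix.conjTranspose_mul, aux_t_ct]
    noncomm_ring
  have hCl : Cᴴ * C = 1 := by
    rw [hCt, hC,
      show (Vᴴ)ᵀ * Aᴴ * Vᴴ * (V * A * Vᵀ) = (Vᴴ)ᵀ * (Aᴴ * ((Vᴴ * V) * A)) * Vᵀ from by
        noncomm_ring,
      hVl, one_mul, hAl, mul_one, ← Matrix.transpose_mul, hVr, Matrix.transpose_one]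
  have hCr : C * Cᴴ = 1 := by
    rw [hCt, hC,
      show V * A * Vᵀ * ((Vᴴ)ᵀ * Aᴴ * Vᴴ) = V * (A * ((Vᵀ * (Vᴴ)ᵀ)) * Aᴴ) * Vᴴ from by
        noncomm_ring,
      ← Matrix.transpose_mul, hVl, Matrix.transpose_one, mul_one, hAr, mul_one, hVr]
  -- key relation
  have key : ∀ μ, zt • (C * (w μ)ᵀ * Cᴴ) = zu • (B * (w μ)ᵀ * Bᴴ) := by
    intro μ
    have e1 := hθrel μ
    rw [hVrel μ] at e1
    have e2 : Vᴴ * w μ * V = zt • (rv⁻¹ * (A * (Vᵀ * (w μ)ᵀ * (Vᴴ)ᵀ) * Aᴴ) * rv) := by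
      apply smul_right_injective (Matrix k k ℂ) hzl0
      show zlam • (Vᴴ * w μ * V) = zlam • _
      rw [e1]
      simp only [Matrix.transpose_smul, Matrix.transpose_mul, Matrix.smul_mul,
        Matrix.mul_smul, smul_smul]
      refine congrArg₂ (· • ·) ?_ ?_
      · ring
      · noncomm_ring
    have e5' : V * (rv⁻¹ * (A * (Vᵀ * (w μ)ᵀ * (Vᴴ)ᵀ) * Aᴴ) * rv) * Vᴴ
        = rw⁻¹ * (C * (w μ)ᵀ * Cᴴ) * rw := by
      rw [hrwi, hrwf, hCt, hC]
      calc V * (rv⁻¹ * (A * (Vᵀ * (w μ)ᵀ * (Vᴴ)ᵀ) * Aᴴ) * rv) * Vᴴ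
          = V * rv⁻¹ * (1 * (A * (Vᵀ * (w μ)ᵀ * (Vᴴ)ᵀ) * Aᴴ) * 1) * (rv * Vᴴ) := by
            noncomm_ring
        _ = V * rv⁻¹ * ((Vᴴ * V) * (A * (Vᵀ * (w μ)ᵀ * (Vᴴ)ᵀ) * Aᴴ) * (Vᴴ * V)) * (rv * Vᴴ) := by
            rw [hVl]
        _ = V * rv⁻¹ * Vᴴ * (V * A * Vᵀ * (w μ)ᵀ * ((Vᴴ)ᵀ * Aᴴ * Vᴴ)) * (V * rv * Vᴴ) := by
            noncomm_ring
    have e3 : w μ = zt • (rw⁻¹ * (C * (w μ)ᵀ * Cᴴ) * rw) := by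
      conv_lhs => rw [show w μ = V * (Vᴴ * w μ * V) * Vᴴ from by
        rw [show V * (Vᴴ * w μ * V) * Vᴴ = (V * Vᴴ) * w μ * (V * Vᴴ) from by noncomm_ring,
          hVr, one_mul, mul_one]]
      rw [e2, Matrix.mul_smul, Matrix.smul_mul, e5']
    have e5 : zt • (rw⁻¹ * (C * (w μ)ᵀ * Cᴴ) * rw) = zu • (rw⁻¹ * (B * (w μ)ᵀ * Bᴴ) * rw) := by
      rw [← e3]; exact hξrel μ
    calc zt • (C * (w μ)ᵀ * Cᴴ)
        = zt • ((rw * rw⁻¹) * (C * (w μ)ᵀ * Cᴴ) * (rw * rw⁻¹)) := by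
          rw [hrwR, one_mul, mul_one]
      _ = zt • (rw * (rw⁻¹ * (C * (w μ)ᵀ * Cᴴ) * rw) * rw⁻¹) := by
          congr 1; noncomm_ring
      _ = zu • (rw * (rw⁻¹ * (B * (w μ)ᵀ * Bᴴ) * rw) * rw⁻¹) := by
          rw [← Matrix.smul_mul, ← Matrix.mul_smul, e5, Matrix.mul_smul, Matrix.smul_mul]
      _ = zu • ((rw * rw⁻¹) * (B * (w μ)ᵀ * Bᴴ) * (rw * rw⁻¹)) := by
          congr 1; noncomm_ring
      _ = zu • (B * (w μ)ᵀ * Bᴴ) := by rw [hrwR, one_mul, mul_one]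
  -- D and F
  set D : Matrix k k ℂ := Bᴴ * C with hD
  have keyD : ∀ μ, zt • (D * (w μ)ᵀ) = zu • ((w μ)ᵀ * D) := by
    intro μ
    have h6 := congrArg (fun X => Bᴴ * X * C) (key μ)
    simp only [Matrix.mul_smul, Matrix.smul_mul] at h6
    calc zt • (D * (w μ)ᵀ)
        = zt • (Bᴴ * (C * (w μ)ᵀ * Cᴴ) * C) := by
          rw [hD]
          congr 1
          rw [show Bᴴ * (C * (w μ)ᵀ * Cᴴ) * C = Bᴴ * C * (w μ)ᵀ * (Cᴴ * C) from by noncomm_ring,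
            hCl, mul_one]
      _ = zu • (Bᴴ * (B * (w μ)ᵀ * Bᴴ) * C) := h6
      _ = zu • ((w μ)ᵀ * D) := by
          rw [hD]
          congr 1
          rw [show Bᴴ * (B * (w μ)ᵀ * Bᴴ) * C = (Bᴴ * B) * ((w μ)ᵀ * (Bᴴ * C)) from by
            noncomm_ring, hBl, one_mul]
  set F : Matrix k k ℂ := Dᵀ with hF
  set c : ℂ := zu⁻¹ * zt with hc
  have keyF : ∀ μ, F * w μ = c • (w μ * F) := by
    intro μ
    have h7 := congrArg Matrix.transpose (keyD μ)
    simp only [Matrix.transpose_smul, Matrix.transpose_mul, Matrix.transpose_transpose] at h7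
    -- h7 : zt • ((w μ) * Dᵀ) = zu • (Dᵀ * (w μ))  (up to orientation)
    apply smul_right_injective (Matrix k k ℂ) hzu0
    show zu • (F * w μ) = zu • (c • (w μ * F))
    rw [smul_smul, hc, ← mul_assoc, mul_inv_cancel₀ hzu0, one_mul, hF, ← h7]
  -- primitivity: F commutes with everything
  obtain ⟨L, hL⟩ := hprimw
  have hFprod := aux_prod_comm w F c keyF
  have hall : ∀ l ≥ L, ∀ M : Matrix k k ℂ, F * M = c ^ l • (M * F) := by
    intro l hl M
    let T : Submodule ℂ (Matrix k k ℂ) :=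
      { carrier := {M | F * M = c ^ l • (M * F)}
        add_mem' := by
          intro a b ha hb
          simp only [Set.mem_setOf_eq] at *
          rw [mul_add, add_mul, smul_add, ha, hb]
        zero_mem' := by simp
        smul_mem' := by
          intro r a ha
          simp only [Set.mem_setOf_eq] at *
          rw [Matrix.mul_smul, Matrix.smul_mul, ha, smul_comm] }
    have hsub : {M : Matrix k k ℂ | ∃ μ : Fin l → ι, M = (List.ofFn fun i => w (μ i)).prod}
        ⊆ T := by rintro M ⟨μ, rfl⟩; exact hFprod l μ
    have hle : Submodule.span ℂ
        {M : Matrix k k ℂ | ∃ μ : Fin l → ι, M = (List.ofFn fun i => w (μ i)).prod} ≤ T :=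
      Submodule.span_le.mpr hsub
    rw [hL l hl] at hle
    exact hle Submodule.mem_top
  -- D unitary, so F ≠ 0
  have hDr : D * Dᴴ = 1 := by
    rw [hD, Matrix.conjTranspose_mul, Matrix.conjTranspose_conjTranspose,
      show Bᴴ * C * (Cᴴ * B) = Bᴴ * (C * Cᴴ) * B from by noncomm_ring, hCr, mul_one, hBl]
  have hDl : Dᴴ * D = 1 := by
    rw [hD, Matrix.conjTranspose_mul, Matrix.conjTranspose_conjTranspose,
      show Cᴴ * B * (Bᴴ * C) = Cᴴ * (B * Bᴴ) * C from by noncomm_ring, hBr, mul_one, hCl]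
  have hF0 : F ≠ 0 := by
    intro h
    have hD0 : D = 0 := by
      have := congrArg Matrix.transpose h
      rwa [hF, Matrix.transpose_transpose, Matrix.transpose_zero] at this
    rw [hD0, zero_mul] at hDr
    exact one_ne_zero (α := Matrix k k ℂ) hDr.symm
  -- c ^ L = 1
  have hcL : c ^ L = 1 := by
    have h1 := hall L le_rfl 1
    rw [mul_one, one_mul] at h1
    by_contra hne
    apply hF0
    have h2 : (1 - c ^ L) • F = 0 := by rw [sub_smul, one_smul, ← h1, sub_self]
    rcases smul_eq_zero.mp h2 with h | h
    · exact absurd (sub_eq_zero.mp h).symm hne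
    · exact h
  have hcomm : ∀ M : Matrix k k ℂ, F * M = M * F := by
    intro M
    rw [hall L le_rfl M, hcL, one_smul]
  -- F is scalar
  obtain ⟨r, hr⟩ := Matrix.mem_range_scalar_of_commute_single
    (M := F) (fun i j _ => (hcomm _).symm)
  have hrF : F = r • 1 := by
    rw [← hr]
    simp [Matrix.scalar_apply, Matrix.smul_eq_diagonal_mul]
  -- r * star r = 1
  have hFFh : F * Fᴴ = 1 := by
    rw [hF, aux_t_ct, ← Matrix.transpose_mul, hDl, Matrix.transpose_one]
  have hr1 : r * star r = 1 := by
    have h8 : (r * star r) • (1 : Matrix k k ℂ) = 1 := by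
      calc (r * star r) • (1 : Matrix k k ℂ)
          = (r • 1) * (star r • 1) := by
            rw [Matrix.smul_mul, Matrix.mul_smul, smul_smul, one_mul]
        _ = F * Fᴴ := by rw [← hrF, hrF, Matrix.conjTranspose_smul, Matrix.conjTranspose_one,
            ← hrF]
        _ = 1 := hFFh
    have i : k := Classical.arbitrary k
    have h9 := congrArg (fun M : Matrix k k ℂ => M i i) h8
    simpa using h9
  have hnr : ‖r‖ = 1 := by
    have h9 : ‖r‖ * ‖r‖ = 1 := by
      have h10 : ‖r‖ * ‖r‖ = Complex.normSq r := by rw [Complex.normSq_eq_norm_sq, sq]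
      have h11 : (Complex.normSq r : ℂ) = 1 := by
        rw [← Complex.mul_conj]; rw [Complex.star_def] at hr1; exact hr1
      have h12 : Complex.normSq r = 1 := by exact_mod_cast h11
      rw [h10, h12]
    rcases mul_self_eq_one_iff.mp h9 with h | h
    · exact h
    · exact absurd h (by have := norm_nonneg r; intro hc; rw [hc] at this; linarith)
  have hDsc : D = r • 1 := by
    have h13 := congrArg Matrix.transpose hrF
    rwa [hF, Matrix.transpose_transpose, Matrix.transpose_smul, Matrix.transpose_one] at h13
  refine ⟨⟨star r, (norm_star r).trans hnr, ?_⟩, ?_⟩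
  · have hGm : Bᵀ * V.map star * A.map star * Vᴴ = D.map star := by
      rw [hD, hC, aux_map_mul, aux_map_mul, aux_map_mul, aux_ct_map, aux_t_map]
      noncomm_ring
    rw [hGm, hDsc, aux_map_smul, aux_map_one]
  · have hCB : C = r • B := by
      have h10 : B * D = B * (r • 1) := by rw [hDsc]
      rw [hD, ← mul_assoc, hBr, one_mul, Matrix.mul_smul, mul_one] at h10
      exact h10
    have hCBs : V.map star * A.map star * Vᴴ = star r • B.map star := by
      have h11 := congrArg (fun X : Matrix k k ℂ => X.map star) hCB
      rw [hC, aux_map_mul, aux_map_mul, aux_t_map, aux_map_smul] at h11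
      exact h11
    have hVtV : Vᵀ * V.map star = 1 := by
      have h12 := congrArg Matrix.transpose hVl
      rwa [Matrix.transpose_mul, Matrix.transpose_one, aux_ct_t] at h12
    calc V * (A * A.map star) * Vᴴ
        = V * A * (Vᵀ * V.map star) * (A.map star * Vᴴ) := by rw [hVtV]; noncomm_ring
      _ = V * A * Vᵀ * (V.map star * A.map star * Vᴴ) := by noncomm_ring
      _ = C * (V.map star * A.map star * Vᴴ) := by rw [hC]
      _ = (r • B) * (star r • B.map star) := by rw [hCB, hCBs]
      _ = (r * star r) • (B * B.map star) := by
          rw [Matrix.smul_mul, Matrix.mul_smul, smul_smul]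
      _ = B * B.map star := by rw [hr1, one_smul]
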